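/- For every Markov decision process P on finite nonempty state type S and finite nonempty action type A and every target set T ⊆ S, the limit maximal reachability probabilities rmax∞ s = ⨆_{n ∈ ℕ} rmax n s exist and satisfy the Bellman optimality equations: rmax∞ s = 1 for every s ∈ T, and rmax∞ s = max_{a ∈ A} ∑_{s' ∈ S} P s a s' * rmax∞ s' for every s ∉ T. -/
import Mathlib

/-- Bounded-horizon maximal reachability values of an MDP `P` w.r.t. target set `T`. -/
noncomputable def rmaxVal {S A : Type*} [Fintype S] [Fintype A] [Nonempty A]
    (P : S → A → S → ℝ) (T : Set S) [DecidablePred (· ∈ T)] : ℕ → S → ℝ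
  | 0, s => if s ∈ T then 1 else 0
  | n + 1, s => if s ∈ T then 1 else
      Finset.univ.sup' Finset.univ_nonempty fun a => ∑ s', P s a s' * rmaxVal P T n s'

/-- The limit maximal reachability probabilities `rmax∞ s = ⨆ n, rmax n s` exist
and satisfy the Bellman optimality equations: `rmax∞ s = 1` on `T` and
`rmax∞ s = max_a ∑ s', P s a s' * rmax∞ s'` off `T`. -/
theorem rmaxVal_iSup_bellman
    {S A : Type*} [Fintype S] [Nonempty S] [Fintype A] [Nonempty A]
    (P : S → A → S → ℝ)
    (hP0 : ∀ s a s', 0 ≤ P s a s')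
    (hP1 : ∀ s a, ∑ s', P s a s' = 1)
    (T : Set S) [DecidablePred (· ∈ T)] :
    (∀ s, Monotone fun n => rmaxVal P T n s) ∧
    (∀ s, BddAbove (Set.range fun n => rmaxVal P T n s)) ∧
    (∀ s ∈ T, (⨆ n, rmaxVal P T n s) = 1) ∧
    (∀ s ∉ T, (⨆ n, rmaxVal P T n s) =
      Finset.univ.sup' Finset.univ_nonempty fun a =>
        ∑ s', P s a s' * ⨆ n, rmaxVal P T n s') := by
  have hle1 : ∀ n s, rmaxVal P T n s ≤ 1 := by
    intro n
    induction n with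
    | zero => intro s; simp only [rmaxVal]; split <;> norm_num
    | succ n ih =>
      intro s
      simp only [rmaxVal]
      split
      · exact le_refl 1
      · apply Finset.sup'_le
        intro a _
        calc ∑ s', P s a s' * rmaxVal P T n s' ≤ ∑ s', P s a s' * 1 := by
              apply Finset.sum_le_sum
              intro s' _
              exact mul_le_mul_of_nonneg_left (ih s') (hP0 s a s')
          _ = 1 := by simp [hP1 s a]
  have hstep : ∀ n s, rmaxVal P T n s ≤ rmaxVal P T (n + 1) s := by
    intro n
    induction n with
    | zero =>
      intro s
      simp only [rmaxVal]
      split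
      · exact le_refl 1
      · next h =>
        obtain ⟨a⟩ := ‹Nonempty A›
        refine Finset.le_sup'_of_le _ (Finset.mem_univ a) ?_
        apply Finset.sum_nonneg
        intro s' _
        apply mul_nonneg (hP0 s a s')
        split <;> norm_num
    | succ n ih =>
      intro s
      show rmaxVal P T (n + 1) s ≤ rmaxVal P T (n + 2) s
      simp only [rmaxVal]
      split
      · exact le_refl 1
      · apply Finset.sup'_le
        intro a _
        refine Finset.le_sup'_of_le _ (Finset.mem_univ a) ?_
        apply Finset.sum_le_sum
        intro s' _
        exact mul_le_mul_of_nonneg_left (ih s') (hP0 s a s')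
  have hmono : ∀ s, Monotone fun n => rmaxVal P T n s :=
    fun s => monotone_nat_of_le_succ fun n => hstep n s
  have hbdd : ∀ s, BddAbove (Set.range fun n => rmaxVal P T n s) := by
    intro s
    exact ⟨1, by rintro x ⟨n, rfl⟩; exact hle1 n s⟩
  refine ⟨hmono, hbdd, ?_, ?_⟩
  · intro s hs
    have : ∀ n, rmaxVal P T n s = 1 := by
      intro n; cases n <;> simp [rmaxVal, hs]
    simp [this]
  · intro s hs
    have htend : ∀ s', Filter.Tendsto (fun n => rmaxVal P T n s') Filter.atTop
        (nhds (⨆ n, rmaxVal P T n s')) := fun s' =>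
      tendsto_atTop_ciSup (hmono s') (hbdd s')
    -- the sequence `rmaxVal (n+1) s` tends both to the sup and to the Bellman RHS
    have h1 : Filter.Tendsto (fun n => rmaxVal P T (n + 1) s) Filter.atTop
        (nhds (⨆ n, rmaxVal P T n s)) := (htend s).comp (Filter.tendsto_add_atTop_nat 1)
    have h2 : Filter.Tendsto (fun n => rmaxVal P T (n + 1) s) Filter.atTop
        (nhds (Finset.univ.sup' Finset.univ_nonempty fun a =>
          ∑ s', P s a s' * ⨆ n, rmaxVal P T n s')) := by
      have : ∀ n, rmaxVal P T (n + 1) s =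
          Finset.univ.sup' Finset.univ_nonempty fun a =>
            ∑ s', P s a s' * rmaxVal P T n s' := by
        intro n; simp [rmaxVal, hs]
      simp only [this]
      apply Filter.Tendsto.finset_sup'_nhds_apply
      intro a _
      exact tendsto_finset_sum _ fun s' _ => ((htend s').const_mul _)
    exact tendsto_nhds_unique h1 h2
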